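/- Pointwise domination of C by the maximal function of A: Let q ∈ (0,∞) and α > 0. Then for every measurable function f on X⁺ and every x ∈ X, C_q^α(f)(x)^q ≤ M(A_q^α(f)^q)(x), where M is the uncentred Hardy–Littlewood maximal operator. -/

import Mathlib

open MeasureTheory Metric Set
open scoped ENNReal NNReal

noncomputable section

variable {X : Type*}

/-- The measure `dμ(y) dt/t` on `X⁺ = X × (0,∞)`, modelled on `X × ℝ`
(supported on `{t > 0}`). -/
def upHalf [MeasurableSpace X] (μ : Measure X) : Measure (X × ℝ) :=
  μ.prod ((volume.restrict (Set.Ioi (0:ℝ))).withDensity fun t => ENNReal.ofReal t⁻¹)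

/-- The measure `dμ(y) dt` on `X⁺` (supported on `{t > 0}`). -/
def upHalf' [MeasurableSpace X] (μ : Measure X) : Measure (X × ℝ) :=
  μ.prod (volume.restrict (Set.Ioi (0:ℝ)))

/-- Cone of aperture `α` with vertex `x`. -/
def coneAt [PseudoMetricSpace X] (α : ℝ) (x : X) : Set (X × ℝ) :=
  {p | dist p.1 x < α * p.2}

/-- Tent of aperture `α` over `O ⊆ X`: the complement in `X⁺` of the union of the
cones of aperture `α` with vertices outside `O`. -/
def tentOver [PseudoMetricSpace X] (α : ℝ) (O : Set X) : Set (X × ℝ) :=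
  {p | 0 < p.2 ∧ ∀ x ∉ O, α * p.2 ≤ dist p.1 x}

/-- The `α`-shadow of `C ⊆ X⁺`: points whose cone meets `C`. -/
def shadowOf [PseudoMetricSpace X] (α : ℝ) (C : Set (X × ℝ)) : Set X :=
  {x | ∃ p ∈ C, p ∈ coneAt α x}

/-- The operator `A_q^α`:
`A_q^α(f)(x) = (∬_{Γ^α(x)} |f(y,t)|^q dμ(y)/V(y,αt) dt/t)^{1/q}`. -/
def Afun [PseudoMetricSpace X] [MeasurableSpace X] (μ : Measure X) (q α : ℝ)
    (f : X × ℝ → ℝ) (x : X) : ℝ≥0∞ :=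
  (∫⁻ p in coneAt α x,
      ENNReal.ofReal (|f p| ^ q) / μ (ball p.1 (α * p.2)) ∂upHalf μ) ^ (1/q)

/-- The truncated operator `A_q^α(·|h)`, integrating over the truncated cone
`Γ_h^α(x)`. -/
def AfunT [PseudoMetricSpace X] [MeasurableSpace X] (μ : Measure X) (q α h : ℝ)
    (f : X × ℝ → ℝ) (x : X) : ℝ≥0∞ :=
  (∫⁻ p in coneAt α x ∩ {p : X × ℝ | p.2 < h},
      ENNReal.ofReal (|f p| ^ q) / μ (ball p.1 (α * p.2)) ∂upHalf μ) ^ (1/q)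

/-- The Carleson operator `C_q^α`:
`C_q^α(f)(x) = sup_{B ∋ x} (μ(B)⁻¹ ∬_{T^α(B)} |f(y,t)|^q dμ(y) dt/t)^{1/q}`,
the supremum being over open balls containing `x`. -/
def Cfun [PseudoMetricSpace X] [MeasurableSpace X] (μ : Measure X) (q α : ℝ)
    (f : X × ℝ → ℝ) (x : X) : ℝ≥0∞ :=
  ⨆ (z : X) (ρ : ℝ) (_ : 0 < ρ ∧ x ∈ ball z ρ),
    ((μ (ball z ρ))⁻¹ *
      ∫⁻ p in tentOver α (ball z ρ), ENNReal.ofReal (|f p| ^ q) ∂upHalf μ) ^ (1/q)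

/-- The tent space quasi-norm `‖f‖_{T^{p,q,α}} = ‖A_q^α(f)‖_{L^p(X)}`. -/
def tNorm [PseudoMetricSpace X] [MeasurableSpace X] (μ : Measure X) (p q α : ℝ)
    (f : X × ℝ → ℝ) : ℝ≥0∞ :=
  (∫⁻ x, Afun μ q α f x ^ p ∂μ) ^ (1/p)

/-- The uncentred Hardy–Littlewood maximal operator applied to an
`ℝ≥0∞`-valued function. -/
def maxFun [PseudoMetricSpace X] [MeasurableSpace X] (μ : Measure X)
    (g : X → ℝ≥0∞) (x : X) : ℝ≥0∞ :=
  ⨆ (z : X) (ρ : ℝ) (_ : 0 < ρ ∧ x ∈ ball z ρ),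
    (μ (ball z ρ))⁻¹ * ∫⁻ y in ball z ρ, g y ∂μ

/-- `μ` is doubling: `V(x,2r) ≤ C V(x,r)` for all `x`, `r > 0`. -/
def DoublingMeas [PseudoMetricSpace X] [MeasurableSpace X] (μ : Measure X) : Prop :=
  ∃ C > (0:ℝ), ∀ (x : X) (r : ℝ), 0 < r →
    μ (ball x (2 * r)) ≤ ENNReal.ofReal C * μ (ball x r)

theorem secondCountable_of_sigmaFinite_posBall' [MetricSpace X] [MeasurableSpace X]
    [OpensMeasurableSpace X] (μ : Measure X) [SigmaFinite μ]
    (hpos : ∀ (x : X) (r : ℝ), 0 < r → 0 < μ (ball x r)) :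
    SecondCountableTopology X := by
  refine Metric.secondCountable_of_almost_dense_set fun ε hε => ?_
  obtain ⟨S, hS⟩ := zorn_subset {S : Set X | S.Pairwise fun a b => ε ≤ dist a b}
    (fun c hc hchain => ⟨⋃₀ c, by
      intro a ha b hb hab
      obtain ⟨s, hs, has⟩ := ha
      obtain ⟨t, ht, hbt⟩ := hb
      rcases hchain.total hs ht with hst | hts
      · exact hc ht (hst has) hbt hab
      · exact hc hs has (hts hbt) hab,
      fun s hs => Set.subset_sUnion_of_mem hs⟩)
  have hSsep : S.Pairwise fun a b => ε ≤ dist a b := hS.1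
  refine ⟨S, ?_, fun x => ?_⟩
  · have hdisj : Pairwise (Function.onFun Disjoint fun s : S => ball (s : X) (ε/2)) := by
      intro a b hab
      exact ball_disjoint_ball (by
        rw [show ε/2 + ε/2 = ε by ring]
        exact hSsep a.2 b.2 (fun h => hab (Subtype.ext h)))
    have hcnt := MeasureTheory.Measure.countable_meas_pos_of_disjoint_iUnion
      (μ := μ) (fun _ : S => measurableSet_ball) hdisj
    have huniv : {i : S | 0 < μ (ball (i : X) (ε/2))} = Set.univ :=
      Set.eq_univ_of_forall fun i => hpos _ _ (by linarith)
    rw [huniv] at hcnt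
    exact Set.countable_coe_iff.mp (Set.countable_univ_iff.mp hcnt)
  · by_contra h
    push_neg at h
    have hxS : x ∉ S := fun hxS => by
      have := h x hxS; simp only [dist_self] at this; linarith
    have hins : insert x S ∈ {S : Set X | S.Pairwise fun a b => ε ≤ dist a b} := by
      refine Set.pairwise_insert.2 ⟨hSsep, fun b hb hne => ?_⟩
      exact ⟨(h b hb).le, by rw [dist_comm]; exact (h b hb).le⟩
    exact hxS (hS.2 hins (Set.subset_insert x S) (Set.mem_insert x S))


/-- **Pointwise domination of `C` by the maximal function of `A`.** For
`q ∈ (0,∞)`, `α > 0`, every measurable `f` on `X⁺` and every `x ∈ X`,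
`C_q^α(f)(x)^q ≤ M(A_q^α(f)^q)(x)`, where `M` is the uncentred
Hardy–Littlewood maximal operator. -/
theorem carleson_le_maximal [MetricSpace X] [MeasurableSpace X] [BorelSpace X]
    (μ : Measure X) [SigmaFinite μ]
    (hpos : ∀ (x : X) (r : ℝ), 0 < r → 0 < μ (ball x r))
    (hfin : ∀ (x : X) (r : ℝ), 0 < r → μ (ball x r) < ∞)
    (q α : ℝ) (hq : 0 < q) (hα : 0 < α)
    (f : X × ℝ → ℝ) (hf : Measurable f) (x : X) :
    Cfun μ q α f x ^ q ≤ maxFun μ (fun y => Afun μ q α f y ^ q) x := by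
  haveI : SecondCountableTopology X := secondCountable_of_sigmaFinite_posBall' μ hpos
  haveI : SFinite (upHalf μ) := by unfold upHalf; infer_instance
  -- notation
  have hgmeas : Measurable fun p : X × ℝ => ENNReal.ofReal (|f p| ^ q) :=
    ENNReal.measurable_ofReal.comp ((Real.continuous_rpow_const hq.le).measurable.comp hf.abs)
  have hVmeas : ∀ (ν : Measure X), SFinite ν →
      Measurable fun p : X × ℝ => ν (ball p.1 (α * p.2)) := by
    intro ν hν
    have hT : MeasurableSet {z : (X × ℝ) × X | dist z.2 z.1.1 < α * z.1.2} :=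
      (isOpen_lt (continuous_snd.dist (continuous_fst.comp continuous_fst))
        (continuous_const.mul (continuous_snd.comp continuous_fst))).measurableSet
    have : (fun p : X × ℝ => ν (ball p.1 (α * p.2)))
        = fun p : X × ℝ => ν (Prod.mk p ⁻¹' {z : (X × ℝ) × X | dist z.2 z.1.1 < α * z.1.2}) := rfl
    rw [this]
    exact measurable_measure_prodMk_left hT
  have hgV : Measurable fun p : X × ℝ =>
      ENNReal.ofReal (|f p| ^ q) / μ (ball p.1 (α * p.2)) :=
    hgmeas.div (hVmeas μ inferInstance)
  -- key estimate
  have key : ∀ z ρ, 0 < ρ → x ∈ ball z ρ →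
      (μ (ball z ρ))⁻¹ * ∫⁻ p in tentOver α (ball z ρ),
          ENNReal.ofReal (|f p| ^ q) ∂upHalf μ
        ≤ maxFun μ (fun y => Afun μ q α f y ^ q) x := by
    intro z ρ hρ hx
    set B := ball z ρ with hB
    have hmain : ∫⁻ p in tentOver α B, ENNReal.ofReal (|f p| ^ q) ∂upHalf μ
        ≤ ∫⁻ y in B, Afun μ q α f y ^ q ∂μ := by
      have htent : MeasurableSet (tentOver α B) := by
        have : tentOver α B = {p : X × ℝ | 0 < p.2} ∩
            ⋂ (w : X) (_ : w ∉ B), {p : X × ℝ | α * p.2 ≤ dist p.1 w} := by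
          ext p; simp [tentOver, Set.mem_iInter]
        rw [this]
        exact ((isOpen_lt continuous_const continuous_snd).measurableSet).inter
          (IsClosed.measurableSet (isClosed_iInter fun w => isClosed_iInter fun _ =>
            isClosed_le (continuous_const.mul continuous_snd)
              (continuous_fst.dist continuous_const)))
      have hunc : Measurable (Function.uncurry fun (y : X) (p : X × ℝ) =>
          (coneAt α y).indicator
            (fun p => ENNReal.ofReal (|f p| ^ q) / μ (ball p.1 (α * p.2))) p) := by
        have hSmeas : MeasurableSet {z : X × (X × ℝ) | dist z.2.1 z.1 < α * z.2.2} :=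
          (isOpen_lt ((continuous_fst.comp continuous_snd).dist continuous_fst)
            (continuous_const.mul (continuous_snd.comp continuous_snd))).measurableSet
        have heq : (Function.uncurry fun (y : X) (p : X × ℝ) =>
            (coneAt α y).indicator
              (fun p => ENNReal.ofReal (|f p| ^ q) / μ (ball p.1 (α * p.2))) p)
            = {z : X × (X × ℝ) | dist z.2.1 z.1 < α * z.2.2}.indicator
              (fun z => ENNReal.ofReal (|f z.2| ^ q) / μ (ball z.2.1 (α * z.2.2))) := by
          funext z
          simp only [Function.uncurry, Set.indicator_apply, coneAt, Set.mem_setOf_eq]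
        rw [heq]
        exact (hgV.comp measurable_snd).indicator hSmeas
      calc ∫⁻ p in tentOver α B, ENNReal.ofReal (|f p| ^ q) ∂upHalf μ
          ≤ ∫⁻ p in tentOver α B,
              (ENNReal.ofReal (|f p| ^ q) / μ (ball p.1 (α * p.2)))
                * (μ.restrict B) (ball p.1 (α * p.2)) ∂upHalf μ := by
            refine setLIntegral_mono' htent fun p hp => ?_
            obtain ⟨hp2, hpB⟩ := hp
            have hball : ball p.1 (α * p.2) ⊆ B := by
              intro y hy
              by_contra hyB
              exact absurd (mem_ball'.mp hy) (not_lt.mpr (hpB y hyB))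
            have hres : (μ.restrict B) (ball p.1 (α * p.2)) = μ (ball p.1 (α * p.2)) := by
              rw [Measure.restrict_apply measurableSet_ball,
                Set.inter_eq_self_of_subset_left hball]
            rw [hres, ENNReal.div_mul_cancel (hpos _ _ (mul_pos hα hp2)).ne'
              (hfin _ _ (mul_pos hα hp2)).ne]
        _ ≤ ∫⁻ p, (ENNReal.ofReal (|f p| ^ q) / μ (ball p.1 (α * p.2)))
                * (μ.restrict B) (ball p.1 (α * p.2)) ∂upHalf μ :=
            setLIntegral_le_lintegral _ _
        _ = ∫⁻ p, ∫⁻ y in B, (coneAt α y).indicator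
              (fun p => ENNReal.ofReal (|f p| ^ q) / μ (ball p.1 (α * p.2))) p ∂μ
              ∂upHalf μ := by
            refine lintegral_congr fun p => ?_
            have hfun : (fun y => (coneAt α y).indicator
                (fun p => ENNReal.ofReal (|f p| ^ q) / μ (ball p.1 (α * p.2))) p)
                = (ball p.1 (α * p.2)).indicator
                  (fun _ => ENNReal.ofReal (|f p| ^ q) / μ (ball p.1 (α * p.2))) := by
              funext y
              by_cases hmem : dist p.1 y < α * p.2
              · rw [Set.indicator_of_mem (show p ∈ coneAt α y from hmem),
                  Set.indicator_of_mem (by rw [mem_ball, dist_comm]; exact hmem)]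
              · rw [Set.indicator_of_notMem (show p ∉ coneAt α y from hmem),
                  Set.indicator_of_notMem (by rw [mem_ball, dist_comm]; exact hmem)]
            rw [hfun, lintegral_indicator measurableSet_ball, setLIntegral_const]
        _ = ∫⁻ y in B, ∫⁻ p, (coneAt α y).indicator
              (fun p => ENNReal.ofReal (|f p| ^ q) / μ (ball p.1 (α * p.2))) p ∂upHalf μ
              ∂μ := (lintegral_lintegral_swap hunc.aemeasurable).symm
        _ = ∫⁻ y in B, Afun μ q α f y ^ q ∂μ := by
            refine lintegral_congr fun y => ?_
            have hcone : MeasurableSet (coneAt α y) :=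
              (isOpen_lt (continuous_fst.dist continuous_const)
                (continuous_const.mul continuous_snd)).measurableSet
            rw [lintegral_indicator hcone, Afun, ← ENNReal.rpow_mul, one_div,
              inv_mul_cancel₀ hq.ne', ENNReal.rpow_one]
    calc (μ B)⁻¹ * ∫⁻ p in tentOver α B, ENNReal.ofReal (|f p| ^ q) ∂upHalf μ
        ≤ (μ B)⁻¹ * ∫⁻ y in B, Afun μ q α f y ^ q ∂μ := mul_le_mul_right hmain _
      _ ≤ maxFun μ (fun y => Afun μ q α f y ^ q) x := by
          simp only [maxFun]
          exact le_iSup_of_le z (le_iSup_of_le ρ (le_iSup_of_le ⟨hρ, hx⟩ le_rfl))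
  -- conclude
  have hsup : Cfun μ q α f x ≤ (maxFun μ (fun y => Afun μ q α f y ^ q) x) ^ (1/q) := by
    simp only [Cfun]
    refine iSup_le fun z => iSup_le fun ρ => iSup_le fun hzρ => ?_
    exact ENNReal.rpow_le_rpow (key z ρ hzρ.1 hzρ.2) (by positivity)
  calc Cfun μ q α f x ^ q
      ≤ ((maxFun μ (fun y => Afun μ q α f y ^ q) x) ^ (1/q)) ^ q :=
        ENNReal.rpow_le_rpow hsup hq.le
    _ = maxFun μ (fun y => Afun μ q α f y ^ q) x := by
        rw [← ENNReal.rpow_mul, one_div, inv_mul_cancel₀ hq.ne', ENNReal.rpow_one]
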